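/- Let 0 < α < 1, T > 0, and let v : [0, T] → ℝ be continuous with v' ∈ L¹(0, T), and assume v is monotone on [0, T]. Then for every t ∈ (0, T] one has v(t) · D^α v(t) ≥ (1/2) · D^α (v²)(t), where v² denotes the function t ↦ v(t)². -/

import Mathlib

open MeasureTheory

/-- The (left) Caputo fractional derivative of order `α` of `u : ℝ → ℝ`:
`D^α u (t) = (1/Γ(1-α)) ∫₀ᵗ (t-s)^(-α) u'(s) ds`. -/
noncomputable def caputoDeriv (α : ℝ) (u : ℝ → ℝ) (t : ℝ) : ℝ :=
  (1 / Real.Gamma (1 - α)) * ∫ s in Set.Ioo 0 t, (t - s) ^ (-α) * deriv u s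

open Set in
lemma mono_deriv_nonneg' {w : ℝ → ℝ} (hw : Monotone w) (s : ℝ)
    (hd : DifferentiableAt ℝ w s) : 0 ≤ deriv w s := by
  have h := hd.hasDerivAt
  rw [hasDerivAt_iff_tendsto_slope] at h
  have h2 : Filter.Tendsto (slope w s) (nhdsWithin s (Ioi s)) (nhds (deriv w s)) :=
    h.mono_left (nhdsWithin_mono s (by intro x hx; exact ne_of_gt hx))
  refine ge_of_tendsto h2 ?_
  filter_upwards [self_mem_nhdsWithin] with y hy
  have : s ≤ y := le_of_lt hy
  rw [slope_def_field]
  exact div_nonneg (by simpa using sub_nonneg.2 (hw this)) (sub_nonneg.2 this)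

open Set in
lemma ae_key' {T : ℝ} (hT : 0 < T) {v : ℝ → ℝ} (hm : MonotoneOn v (Icc 0 T)) :
    ∀ᵐ s, s ∈ Ioo 0 T → (DifferentiableAt ℝ v s ∧ 0 ≤ deriv v s ∧
      deriv (fun x => v x ^ 2) s = 2 * v s * deriv v s) := by
  set w : ℝ → ℝ := fun s => v (min (max s 0) T) with hw
  have hwm : Monotone w := by
    intro a b hab
    have ha : min (max a 0) T ∈ Icc 0 T := ⟨le_min (le_max_right a 0) hT.le, min_le_right _ _⟩
    have hb : min (max b 0) T ∈ Icc 0 T := ⟨le_min (le_max_right b 0) hT.le, min_le_right _ _⟩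
    exact hm ha hb (min_le_min (max_le_max hab le_rfl) le_rfl)
  filter_upwards [hwm.ae_differentiableAt] with s hds hs
  have heq : w =ᶠ[nhds s] v := by
    filter_upwards [isOpen_Ioo.mem_nhds hs] with x hx
    simp [hw, max_eq_left hx.1.le, min_eq_left hx.2.le]
  have hv : DifferentiableAt ℝ v s := hds.congr_of_eventuallyEq heq.symm
  have hde : deriv v s = deriv w s := (heq.symm.deriv_eq)
  refine ⟨hv, hde ▸ mono_deriv_nonneg' hwm s hds, ?_⟩
  have := (hv.hasDerivAt.pow 2).deriv
  change deriv (v ^ 2) s = _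
  rw [this]; norm_num

lemma meas_rpow_const' (c : ℝ) : Measurable fun x : ℝ => x ^ c :=
  measurable_of_continuousOn_compl_singleton 0
    (continuousOn_of_forall_continuousAt fun x hx => Real.continuousAt_rpow_const x c (Or.inl hx))

open Set in
lemma mono_case' (α T : ℝ) (hα0 : 0 < α) (hα1 : α < 1) (hT : 0 < T)
    (v : ℝ → ℝ) (hc : ContinuousOn v (Icc 0 T))
    (hint : IntegrableOn (deriv v) (Ioo 0 T))
    (hm : MonotoneOn v (Icc 0 T)) :
    ∀ t ∈ Ioc 0 T,
      (1 / 2) * caputoDeriv α (fun s => (v s) ^ 2) t ≤ v t * caputoDeriv α v t := by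
  intro t ht
  obtain ⟨ht0, htT⟩ := ht
  have hΓ : 0 < Real.Gamma (1 - α) := Real.Gamma_pos_of_pos (by linarith)
  have hΓ' : 0 ≤ 1 / Real.Gamma (1 - α) := by positivity
  set g : ℝ → ℝ := fun s => (t - s) ^ (-α) * deriv v s with hgdef
  set F : ℝ → ℝ := fun s => (t - s) ^ (-α) * deriv (fun x => v x ^ 2) s with hFdef
  have hgmeas : Measurable g :=
    ((meas_rpow_const' (-α)).comp (measurable_const.sub measurable_id)).mul (measurable_deriv v)
  have hFmeas : Measurable F :=
    ((meas_rpow_const' (-α)).comp (measurable_const.sub measurable_id)).mul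
      (measurable_deriv (fun x => v x ^ 2))
  have hsub : Ioo (0:ℝ) t ⊆ Ioo 0 T := Ioo_subset_Ioo le_rfl htT
  have hsubI : Ioo (0:ℝ) t ⊆ Icc 0 T := hsub.trans Ioo_subset_Icc_self
  -- a.e. facts on the restricted measure
  have haeall : ∀ᵐ s ∂(volume.restrict (Ioo (0:ℝ) t)),
      s ∈ Ioo 0 t ∧ (DifferentiableAt ℝ v s ∧ 0 ≤ deriv v s ∧
        deriv (fun x => v x ^ 2) s = 2 * v s * deriv v s) := by
    have h1 : ∀ᵐ s ∂(volume.restrict (Ioo (0:ℝ) t)), s ∈ Ioo 0 T →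
        (DifferentiableAt ℝ v s ∧ 0 ≤ deriv v s ∧
          deriv (fun x => v x ^ 2) s = 2 * v s * deriv v s) :=
      (ae_key' hT hm).filter_mono (ae_mono Measure.restrict_le_self)
    filter_upwards [ae_restrict_mem measurableSet_Ioo, h1] with s hs h2
    exact ⟨hs, h2 (hsub hs)⟩
  have hgnn : ∀ᵐ s ∂(volume.restrict (Ioo (0:ℝ) t)), 0 ≤ g s := by
    filter_upwards [haeall] with s ⟨hs, _, hdv, _⟩
    exact mul_nonneg (Real.rpow_nonneg (by linarith [hs.2]) _) hdv
  have hFeq : F =ᵐ[volume.restrict (Ioo (0:ℝ) t)] fun s => 2 * v s * g s := by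
    filter_upwards [haeall] with s ⟨hs, _, _, hd2⟩
    simp only [hFdef, hgdef, hd2]; ring
  have hle : ∀ᵐ s ∂(volume.restrict (Ioo (0:ℝ) t)), 2 * v s * g s ≤ 2 * v t * g s := by
    filter_upwards [haeall] with s ⟨hs, _, hdv, _⟩
    have hvle : v s ≤ v t := hm (hsubI hs) ⟨ht0.le, htT⟩ hs.2.le
    have hg0 : 0 ≤ g s := mul_nonneg (Real.rpow_nonneg (by linarith [hs.2]) _) hdv
    nlinarith
  -- bound on v
  obtain ⟨M, hM⟩ := (isCompact_Icc : IsCompact (Icc (0:ℝ) t)).exists_bound_of_continuousOn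
    (hc.mono (Icc_subset_Icc le_rfl htT))
  simp only [caputoDeriv]
  by_cases hgint : IntegrableOn g (Ioo 0 t)
  · -- main case: g integrable
    have h2vg : Integrable (fun s => 2 * v s * g s) (volume.restrict (Ioo (0:ℝ) t)) := by
      refine Integrable.mono' (hgint.const_mul (2 * M)) ?_ ?_
      · exact ((aestronglyMeasurable_const.mul
          ((hc.mono hsubI).aestronglyMeasurable measurableSet_Ioo)).mul
          hgmeas.aestronglyMeasurable)
      · filter_upwards [hgnn, ae_restrict_mem measurableSet_Ioo] with s h0 hs
        have hMs : |v s| ≤ M := by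
          have := hM s ⟨hs.1.le, hs.2.le⟩; simpa using this
        have : ‖2 * v s * g s‖ = 2 * |v s| * g s := by
          simp [Real.norm_eq_abs, abs_mul, abs_of_nonneg h0]
        rw [this]
        nlinarith [abs_nonneg (v s)]
    have hFint : Integrable F (volume.restrict (Ioo (0:ℝ) t)) := h2vg.congr hFeq.symm
    have step1 : ∫ s in Ioo (0:ℝ) t, F s = ∫ s in Ioo (0:ℝ) t, 2 * v s * g s :=
      integral_congr_ae hFeq
    have step2 : ∫ s in Ioo (0:ℝ) t, 2 * v s * g s ≤ ∫ s in Ioo (0:ℝ) t, 2 * v t * g s :=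
      integral_mono_ae h2vg (hgint.const_mul _) hle
    have step3 : ∫ s in Ioo (0:ℝ) t, 2 * v t * g s = 2 * v t * ∫ s in Ioo (0:ℝ) t, g s :=
      integral_const_mul _ _
    have hkey : ∫ s in Ioo (0:ℝ) t, F s ≤ 2 * v t * ∫ s in Ioo (0:ℝ) t, g s := by
      rw [step1]; rw [step3] at step2; exact step2
    nlinarith [hkey, mul_le_mul_of_nonneg_left hkey hΓ']
  · -- g not integrable : ∫ g = 0
    have hgz : ∫ s in Ioo (0:ℝ) t, g s = 0 := integral_undef hgint
    have hF0 : ∫ s in Ioo (0:ℝ) t, F s ≤ 0 := by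
      by_cases hFint : Integrable F (volume.restrict (Ioo (0:ℝ) t))
      · have h2vg : Integrable (fun s => 2 * v s * g s) (volume.restrict (Ioo (0:ℝ) t)) :=
          hFint.congr hFeq
        have hvt : v t = 0 := by
          by_contra hne
          set c := |v t| / 2 with hcdef
          have hc0 : 0 < c := by positivity
          have hct : ContinuousWithinAt (fun s => |v s|) (Icc 0 T) t :=
            (hc t ⟨ht0.le, htT⟩).abs
          have hev : ∀ᶠ s in nhdsWithin t (Icc 0 T), c < |v s| :=
            hct.eventually (eventually_gt_nhds (by rw [hcdef]; exact half_lt_self (abs_pos.2 hne)))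
          rw [Filter.Eventually, Metric.mem_nhdsWithin_iff] at hev
          obtain ⟨δ, hδ0, hδ⟩ := hev
          set t₁ := max (t / 2) (t - δ / 2) with ht₁def
          have ht₁0 : 0 < t₁ := lt_of_lt_of_le (by linarith) (le_max_left _ _)
          have ht₁t : t₁ < t := max_lt (by linarith) (by linarith)
          have hbig : ∀ s ∈ Ioo t₁ t, c < |v s| := by
            intro s hs
            refine hδ ⟨Metric.mem_ball.mpr ?_, by constructor <;> [linarith [hs.1, ht₁0]; exact le_of_lt (lt_of_lt_of_le hs.2 htT)]⟩
            rw [Real.dist_eq, abs_of_nonpos (by linarith [hs.2])]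
            have : t - δ / 2 ≤ t₁ := le_max_right _ _
            linarith [hs.1]
          -- g integrable near t
          have hI1 : IntegrableOn g (Ioo t₁ t) := by
            refine Integrable.mono'
              (((IntegrableOn.mono_set h2vg (Ioo_subset_Ioo ht₁0.le le_rfl)).norm.const_mul (1 / (2 * c))))
              (hgmeas.aestronglyMeasurable) ?_
            have hgnn' : ∀ᵐ s ∂(volume.restrict (Ioo t₁ t)), 0 ≤ g s :=
              ae_restrict_of_ae_restrict_of_subset (Ioo_subset_Ioo ht₁0.le le_rfl) hgnn
            filter_upwards [hgnn', ae_restrict_mem measurableSet_Ioo] with s h0 hs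
            have h1 : c < |v s| := hbig s hs
            have h2 : ‖2 * v s * g s‖ = 2 * |v s| * g s := by
              simp [Real.norm_eq_abs, abs_mul, abs_of_nonneg h0]
            rw [Real.norm_eq_abs, abs_of_nonneg h0, h2]
            rw [div_mul_eq_mul_div, le_div_iff₀ (by positivity)]
            nlinarith
          -- g integrable away from t
          have hI2 : IntegrableOn g (Ioc 0 t₁) := by
            have hsub2 : Ioc (0:ℝ) t₁ ⊆ Ioo 0 T := fun x hx => ⟨hx.1, lt_of_le_of_lt hx.2 (lt_of_lt_of_le ht₁t htT)⟩
            refine Integrable.mono'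
              (((hint.mono_set hsub2).norm.const_mul ((t - t₁) ^ (-α))))
              (hgmeas.aestronglyMeasurable) ?_
            filter_upwards [ae_restrict_mem measurableSet_Ioc] with s hs
            have hts : 0 < t - s := by linarith [hs.2, ht₁t]
            have hmono2 : (t - s) ^ (-α) ≤ (t - t₁) ^ (-α) := by
              refine Real.rpow_le_rpow_of_nonpos (by linarith) (by linarith [hs.2]) (by linarith)
            rw [Real.norm_eq_abs, hgdef]
            calc |(t - s) ^ (-α) * deriv v s| = (t - s) ^ (-α) * |deriv v s| := by
                  rw [abs_mul, abs_of_nonneg (Real.rpow_nonneg hts.le _)]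
              _ ≤ (t - t₁) ^ (-α) * ‖deriv v s‖ := by
                  rw [Real.norm_eq_abs]
                  exact mul_le_mul_of_nonneg_right hmono2 (abs_nonneg _)
          exact hgint (((hI2.union hI1).mono_set (fun x hx => by
            rcases le_or_gt x t₁ with h | h
            · exact Or.inl ⟨hx.1, h⟩
            · exact Or.inr ⟨h, hx.2⟩)))
        -- with v t = 0, F ≤ 0 a.e.
        refine integral_nonpos_of_ae ?_
        filter_upwards [hFeq, hgnn, haeall] with s h1 h2 ⟨hs, _, _, _⟩
        simp only [Pi.zero_apply]
        rw [h1]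
        have hvs : v s ≤ 0 := by
          have := hm (hsubI hs) ⟨ht0.le, htT⟩ hs.2.le
          linarith [hvt ▸ this]
        nlinarith
      · rw [integral_undef hFint]
    rw [hgz]
    nlinarith [mul_le_mul_of_nonneg_left hF0 hΓ']

theorem stmt4 (α T : ℝ) (hα0 : 0 < α) (hα1 : α < 1) (hT : 0 < T)
    (v : ℝ → ℝ) (hc : ContinuousOn v (Set.Icc 0 T))
    (hint : IntegrableOn (deriv v) (Set.Ioo 0 T))
    (hmono : MonotoneOn v (Set.Icc 0 T) ∨ AntitoneOn v (Set.Icc 0 T)) :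
    ∀ t ∈ Set.Ioc 0 T,
      (1 / 2) * caputoDeriv α (fun s => (v s) ^ 2) t ≤ v t * caputoDeriv α v t := by
  rcases hmono with hm | hm
  · exact mono_case' α T hα0 hα1 hT v hc hint hm
  · intro t ht
    have hderiv : deriv (fun s => -(v s)) = fun s => -(deriv v s) := by
      funext s; exact deriv.neg
    have h : (1 / 2) * caputoDeriv α (fun s => (-(v s)) ^ 2) t ≤
        (-(v t)) * caputoDeriv α (fun s => -(v s)) t :=
      mono_case' α T hα0 hα1 hT (fun s => -(v s)) hc.neg
        (by rw [hderiv]; exact hint.neg)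
        (fun a ha b hb hab => neg_le_neg (hm ha hb hab)) t ht
    have e1 : caputoDeriv α (fun s => (-(v s)) ^ 2) t = caputoDeriv α (fun s => (v s) ^ 2) t := by
      rw [show (fun s => (-(v s)) ^ 2) = fun s => (v s) ^ 2 from funext fun s => by ring]
    have e2 : caputoDeriv α (fun s => -(v s)) t = -(caputoDeriv α v t) := by
      simp only [caputoDeriv, hderiv]
      rw [show (∫ s in Set.Ioo 0 t, (t - s) ^ (-α) * -deriv v s)
          = ∫ s in Set.Ioo 0 t, -((t - s) ^ (-α) * deriv v s) from by congr 1; funext s; ring,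
        integral_neg]
      ring
    rw [e1, e2] at h
    calc (1 / 2) * caputoDeriv α (fun s => (v s) ^ 2) t
        ≤ -(v t) * -(caputoDeriv α v t) := h
      _ = v t * caputoDeriv α v t := by ring
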